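/- Let p, q ∈ ℝⁿ be regular vectors and let g ∈ (ℝ ∪ {−∞})ⁿ and h ∈ ℝⁿ be vectors with g ≤ h. Set Δ = (q⁻ p)^{1/2} and μ = Δ ⊕ q⁻ g ⊕ h⁻ p. Then the minimum of q⁻ x ⊕ x⁻ p over all regular vectors x ∈ ℝⁿ with g ≤ x ≤ h equals μ, and a regular vector x with g ≤ x ≤ h attains this minimum if and only if μ⁻¹ p ⊕ g ≤ x ≤ (μ⁻¹ q⁻ ⊕ h⁻)⁻, where μ⁻¹ = −μ. -/

import Mathlib

open Finset

noncomputable section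

namespace MaxPlus

/-- Max-plus multiplicative inverse: `-a` for real `a`, `⊥` for `⊥`. -/
def tinv (a : WithBot ℝ) : WithBot ℝ := WithBot.map (fun r => -r) a

/-- Max-plus rational power `a^(1/k) = a / k`. -/
def trt (a : WithBot ℝ) (k : ℕ) : WithBot ℝ := WithBot.map (fun r => r / (k : ℝ)) a

/-- A vector is regular if it has no `⊥` (= -∞) entries. -/
def Reg {n : ℕ} (x : Fin n → WithBot ℝ) : Prop := ∀ i, x i ≠ ⊥

/-- `cdot q x = q⁻ x`, the max-plus product of the conjugate row vector `q⁻` with `x`. -/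
def cdot {n : ℕ} (q x : Fin n → WithBot ℝ) : WithBot ℝ :=
  Finset.univ.sup fun i => tinv (q i) + x i

/-- Max-plus matrix-vector product. -/
def mulVec {m n : ℕ} (A : Matrix (Fin m) (Fin n) (WithBot ℝ)) (x : Fin n → WithBot ℝ) :
    Fin m → WithBot ℝ := fun i => Finset.univ.sup fun j => A i j + x j

/-- Max-plus matrix product. -/
def tmul {l m n : ℕ} (A : Matrix (Fin l) (Fin m) (WithBot ℝ))
    (B : Matrix (Fin m) (Fin n) (WithBot ℝ)) : Matrix (Fin l) (Fin n) (WithBot ℝ) :=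
  fun i j => Finset.univ.sup fun k => A i k + B k j

/-- Multiplicative conjugate transpose of a matrix. -/
def conjM {m n : ℕ} (A : Matrix (Fin m) (Fin n) (WithBot ℝ)) :
    Matrix (Fin n) (Fin m) (WithBot ℝ) := fun i j => tinv (A j i)

/-- Max-plus identity matrix. -/
def tId {n : ℕ} : Matrix (Fin n) (Fin n) (WithBot ℝ) := fun i j => if i = j then 0 else ⊥

/-- Max-plus matrix power. -/
def tpow {n : ℕ} (A : Matrix (Fin n) (Fin n) (WithBot ℝ)) : ℕ → Matrix (Fin n) (Fin n) (WithBot ℝ)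
  | 0 => tId
  | k + 1 => tmul A (tpow A k)

/-- Max-plus trace. -/
def ttr {n : ℕ} (A : Matrix (Fin n) (Fin n) (WithBot ℝ)) : WithBot ℝ :=
  Finset.univ.sup fun i => A i i

/-- `Tr(A) = tr A ⊕ tr A² ⊕ ⋯ ⊕ tr Aⁿ`. -/
def TrOp {n : ℕ} (A : Matrix (Fin n) (Fin n) (WithBot ℝ)) : WithBot ℝ :=
  (Finset.Icc 1 n).sup fun m => ttr (tpow A m)

/-- Kleene star `A* = I ⊕ A ⊕ ⋯ ⊕ A^(n-1)`. -/
def kstar {n : ℕ} (A : Matrix (Fin n) (Fin n) (WithBot ℝ)) : Matrix (Fin n) (Fin n) (WithBot ℝ) :=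
  fun i j => (Finset.range n).sup fun k => tpow A k i j

/-- Max-plus spectral radius `λ = ⊕_{m=1}^n (tr A^m)^(1/m)`. -/
def specRad {n : ℕ} (A : Matrix (Fin n) (Fin n) (WithBot ℝ)) : WithBot ℝ :=
  (Finset.Icc 1 n).sup fun m => trt (ttr (tpow A m)) m

/-- `prodAB A B [i₁, …, i_k] = A B^{i₁} A B^{i₂} ⋯ A B^{i_k}`. -/
def prodAB {n : ℕ} (A B : Matrix (Fin n) (Fin n) (WithBot ℝ)) :
    List ℕ → Matrix (Fin n) (Fin n) (WithBot ℝ)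
  | [] => tId
  | i :: t => tmul (tmul A (tpow B i)) (prodAB A B t)

/-- The all-ones (all-`𝟙 = 0`) vector. -/
def onesV (n : ℕ) : Fin n → WithBot ℝ := fun _ => 0

end MaxPlus

open MaxPlus


namespace MaxPlus

lemma tinv_coe (r : ℝ) : tinv (r : WithBot ℝ) = ((-r : ℝ) : WithBot ℝ) := rfl

lemma trt2_le_coe {a : WithBot ℝ} {r : ℝ} (h : a ≤ (r : WithBot ℝ)) :
    trt a 2 ≤ ((r / 2 : ℝ) : WithBot ℝ) := by
  induction a using WithBot.recBotCoe with
  | bot => simp [trt]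
  | coe s =>
    have hs : s ≤ r := by exact_mod_cast h
    simp only [trt, WithBot.map_coe, WithBot.coe_le_coe]
    push_cast
    linarith

lemma coe_le_trt2 {a : WithBot ℝ} {r : ℝ} (h : (r : WithBot ℝ) ≤ a) :
    ((r / 2 : ℝ) : WithBot ℝ) ≤ trt a 2 := by
  induction a using WithBot.recBotCoe with
  | bot => simp at h
  | coe s =>
    have hs : r ≤ s := by exact_mod_cast h
    simp only [trt, WithBot.map_coe, WithBot.coe_le_coe]
    push_cast
    linarith

lemma le_coe_shift {a : WithBot ℝ} {c m : ℝ} (h : (c : WithBot ℝ) + a ≤ ↑m) :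
    a ≤ ↑(m - c) := by
  induction a using WithBot.recBotCoe with
  | bot => exact bot_le
  | coe s =>
    rw [← WithBot.coe_add, WithBot.coe_le_coe] at h
    exact WithBot.coe_le_coe.2 (by linarith)

lemma tinv_le_of_coe_le {r : ℝ} {b : WithBot ℝ} (h : (r : WithBot ℝ) ≤ b) :
    tinv b ≤ ↑(-r) := by
  induction b using WithBot.recBotCoe with
  | bot => simp at h
  | coe s =>
    have : r ≤ s := by exact_mod_cast h
    simpa [tinv] using WithBot.coe_le_coe.2 (by linarith : -s ≤ -r)

lemma le_cdot {n : ℕ} (q x : Fin n → WithBot ℝ) (i : Fin n) :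
    tinv (q i) + x i ≤ cdot q x :=
  Finset.le_sup (f := fun i => tinv (q i) + x i) (Finset.mem_univ i)

lemma cdot_le {n : ℕ} {q x : Fin n → WithBot ℝ} {a : WithBot ℝ}
    (h : ∀ i, tinv (q i) + x i ≤ a) : cdot q x ≤ a :=
  Finset.sup_le fun i _ => h i

end MaxPlus

/-- constrained Chebyshev-like approximation with box constraints. -/
theorem stmt_0 {n : ℕ} (p q g h : Fin n → WithBot ℝ)
    (hp : Reg p) (hq : Reg q) (hh : Reg h) (hgh : ∀ i, g i ≤ h i)
    (μ : WithBot ℝ)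
    (hμ : μ = trt (cdot q p) 2 ⊔ cdot q g ⊔ cdot h p) :
    IsLeast {v | ∃ x : Fin n → WithBot ℝ, Reg x ∧ (∀ i, g i ≤ x i ∧ x i ≤ h i) ∧
        cdot q x ⊔ cdot x p = v} μ ∧
      ∀ x : Fin n → WithBot ℝ, Reg x → (∀ i, g i ≤ x i ∧ x i ≤ h i) →
        (cdot q x ⊔ cdot x p = μ ↔
          ∀ i, (tinv μ + p i) ⊔ g i ≤ x i ∧
            x i ≤ tinv ((tinv μ + tinv (q i)) ⊔ tinv (h i))) := by
  classical
  rcases isEmpty_or_nonempty (Fin n) with he | hne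
  · have hbot : μ = ⊥ := by
      simp [hμ, cdot, trt, Finset.univ_eq_empty]
    subst hbot
    refine ⟨⟨⟨fun _ => (0 : WithBot ℝ), fun i => (IsEmpty.false i).elim,
        fun i => (IsEmpty.false i).elim, by simp [cdot, Finset.univ_eq_empty]⟩,
        fun v _ => bot_le⟩, ?_⟩
    intro x _ _
    constructor
    · intro _ i
      exact (IsEmpty.false i).elim
    · intro _
      simp [cdot, Finset.univ_eq_empty]
  · obtain ⟨i0⟩ := hne
    obtain ⟨Q, hQ⟩ : ∃ Q : Fin n → ℝ, ∀ i, q i = ↑(Q i) :=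
      ⟨fun i => (q i).unbot (hq i), fun i => (WithBot.coe_unbot _ _).symm⟩
    obtain ⟨P, hP⟩ : ∃ P : Fin n → ℝ, ∀ i, p i = ↑(P i) :=
      ⟨fun i => (p i).unbot (hp i), fun i => (WithBot.coe_unbot _ _).symm⟩
    obtain ⟨H, hH⟩ : ∃ H : Fin n → ℝ, ∀ i, h i = ↑(H i) :=
      ⟨fun i => (h i).unbot (hh i), fun i => (WithBot.coe_unbot _ _).symm⟩
    have hqp : ∀ i, ((P i - Q i : ℝ) : WithBot ℝ) ≤ cdot q p := by
      intro i
      have h1 := le_cdot q p i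
      rw [hQ i, hP i, tinv_coe, ← WithBot.coe_add] at h1
      have h2 : (P i - Q i : ℝ) = -Q i + P i := by ring
      rw [h2]; exact h1
    have hμne : μ ≠ ⊥ := by
      intro hb
      have h1 : (((P i0 - Q i0) / 2 : ℝ) : WithBot ℝ) ≤ μ := by
        rw [hμ]
        exact le_sup_of_le_left (le_sup_of_le_left (coe_le_trt2 (hqp i0)))
      rw [hb] at h1
      simp at h1
    obtain ⟨m, hm⟩ := WithBot.ne_bot_iff_exists.1 hμne
    subst hm
    have hA : ∀ i, (P i - Q i) / 2 ≤ m := by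
      intro i
      have h1 : (((P i - Q i) / 2 : ℝ) : WithBot ℝ) ≤ ↑m := by
        rw [hμ]
        exact le_sup_of_le_left (le_sup_of_le_left (coe_le_trt2 (hqp i)))
      exact_mod_cast h1
    have hBle : cdot q g ≤ ((m : ℝ) : WithBot ℝ) := by
      rw [hμ]; exact le_sup_of_le_left le_sup_right
    have hC : ∀ i, P i - H i ≤ m := by
      intro i
      have h1 : tinv (h i) + p i ≤ ↑m := (le_cdot h p i).trans (by rw [hμ]; exact le_sup_right)
      rw [hH i, hP i, tinv_coe, ← WithBot.coe_add, WithBot.coe_le_coe] at h1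
      linarith
    have lb : ∀ x : Fin n → WithBot ℝ, Reg x → (∀ i, g i ≤ x i ∧ x i ≤ h i) →
        ((m : ℝ) : WithBot ℝ) ≤ cdot q x ⊔ cdot x p := by
      intro x hx hf
      obtain ⟨X, hX⟩ : ∃ X : Fin n → ℝ, ∀ i, x i = ↑(X i) :=
        ⟨fun i => (x i).unbot (hx i), fun i => (WithBot.coe_unbot _ _).symm⟩
      have hqx : ∀ i, ((X i - Q i : ℝ) : WithBot ℝ) ≤ cdot q x := by
        intro i
        have h1 := le_cdot q x i
        rw [hQ i, hX i, tinv_coe, ← WithBot.coe_add] at h1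
        have h2 : (X i - Q i : ℝ) = -Q i + X i := by ring
        rw [h2]; exact h1
      have hxp : ∀ i, ((P i - X i : ℝ) : WithBot ℝ) ≤ cdot x p := by
        intro i
        have h1 := le_cdot x p i
        rw [hX i, hP i, tinv_coe, ← WithBot.coe_add] at h1
        have h2 : (P i - X i : ℝ) = -X i + P i := by ring
        rw [h2]; exact h1
      have hne2 : cdot q x ⊔ cdot x p ≠ ⊥ := by
        intro hb
        have h1 := (hqx i0).trans ((le_sup_left (b := cdot x p)).trans hb.le)
        simp at h1
      obtain ⟨v, hv⟩ := WithBot.ne_bot_iff_exists.1 hne2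
      have hqv : ∀ i, X i - Q i ≤ v := by
        intro i
        have h1 := (hqx i).trans (le_sup_left (b := cdot x p))
        rw [← hv] at h1
        exact_mod_cast h1
      have hpv : ∀ i, P i - X i ≤ v := by
        intro i
        have h1 := (hxp i).trans (le_sup_right (a := cdot q x))
        rw [← hv] at h1
        exact_mod_cast h1
      rw [hμ]
      refine sup_le (sup_le ?_ ?_) ?_
      · rw [← hv]
        have h1 : cdot q p ≤ ((v + v : ℝ) : WithBot ℝ) := by
          refine cdot_le fun i => ?_
          rw [hQ i, hP i, tinv_coe, ← WithBot.coe_add, WithBot.coe_le_coe]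
          have := hqv i; have := hpv i; linarith
        have h2 := trt2_le_coe h1
        have h3 : (v + v : ℝ) / 2 = v := by ring
        rwa [h3] at h2
      · refine cdot_le fun i => ?_
        calc tinv (q i) + g i ≤ tinv (q i) + x i := add_le_add_right (hf i).1 _
          _ ≤ cdot q x := le_cdot q x i
          _ ≤ cdot q x ⊔ cdot x p := le_sup_left
      · refine cdot_le fun i => ?_
        have h1 : tinv (h i) ≤ tinv (x i) := by
          rw [hX i, tinv_coe]
          exact tinv_le_of_coe_le ((hX i) ▸ (hf i).2)
        calc tinv (h i) + p i ≤ tinv (x i) + p i := add_le_add_left h1 _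
          _ ≤ cdot x p := le_cdot x p i
          _ ≤ cdot q x ⊔ cdot x p := le_sup_right
    have hUB : ∀ i, tinv ((tinv ((m : ℝ) : WithBot ℝ) + tinv (q i)) ⊔ tinv (h i))
        = ((-((-m - Q i) ⊔ (-H i)) : ℝ) : WithBot ℝ) := by
      intro i
      rw [hQ i, hH i, tinv_coe, tinv_coe, tinv_coe, ← WithBot.coe_add, ← WithBot.coe_sup,
        tinv_coe]
      have h2 : (-m + -Q i : ℝ) = -m - Q i := by ring
      rw [h2]
    constructor
    · constructor
      · refine ⟨fun i => ((P i - m : ℝ) : WithBot ℝ) ⊔ g i, ?_, ?_, ?_⟩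
        · intro i hb
          have h1 : ((P i - m : ℝ) : WithBot ℝ) ≤ ⊥ := hb ▸ le_sup_left
          simp at h1
        · intro i
          refine ⟨le_sup_right, sup_le ?_ (hgh i)⟩
          rw [hH i]
          exact WithBot.coe_le_coe.2 (by have := hC i; linarith)
        · refine le_antisymm (sup_le (cdot_le fun i => ?_) (cdot_le fun i => ?_)) ?_
          · rw [hQ i, tinv_coe]
            rcases le_total ((↑(P i - m) : WithBot ℝ)) (g i) with h' | h'
            · rw [sup_eq_right.2 h']
              have h1 := (le_cdot q g i).trans hBle
              rwa [hQ i, tinv_coe] at h1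
            · rw [sup_eq_left.2 h', ← WithBot.coe_add, WithBot.coe_le_coe]
              have := hA i; linarith
          · have h1 : tinv (((P i - m : ℝ) : WithBot ℝ) ⊔ g i) ≤ ↑(-(P i - m)) :=
              tinv_le_of_coe_le le_sup_left
            calc tinv (((P i - m : ℝ) : WithBot ℝ) ⊔ g i) + p i
                ≤ ((-(P i - m) : ℝ) : WithBot ℝ) + ↑(P i) := by
                  rw [hP i]; exact add_le_add_left h1 _
              _ ≤ ↑m := by
                  rw [← WithBot.coe_add]
                  exact WithBot.coe_le_coe.2 (by linarith)
          · refine lb _ ?_ ?_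
            · intro i hb
              have h1 : ((P i - m : ℝ) : WithBot ℝ) ≤ ⊥ := hb ▸ le_sup_left
              simp at h1
            · intro i
              refine ⟨le_sup_right, sup_le ?_ (hgh i)⟩
              rw [hH i]
              exact WithBot.coe_le_coe.2 (by have := hC i; linarith)
      · rintro v ⟨x, hx, hf, rfl⟩
        exact lb x hx hf
    · intro x hx hf
      obtain ⟨X, hX⟩ : ∃ X : Fin n → ℝ, ∀ i, x i = ↑(X i) :=
        ⟨fun i => (x i).unbot (hx i), fun i => (WithBot.coe_unbot _ _).symm⟩
      constructor
      · intro hval i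
        have hql : cdot q x ≤ ((m : ℝ) : WithBot ℝ) := le_sup_left.trans hval.le
        have hpl : cdot x p ≤ ((m : ℝ) : WithBot ℝ) := le_sup_right.trans hval.le
        have h1 : X i - Q i ≤ m := by
          have h1 := (le_cdot q x i).trans hql
          rw [hQ i, hX i, tinv_coe, ← WithBot.coe_add, WithBot.coe_le_coe] at h1
          linarith
        have h2 : P i - X i ≤ m := by
          have h2 := (le_cdot x p i).trans hpl
          rw [hX i, hP i, tinv_coe, ← WithBot.coe_add, WithBot.coe_le_coe] at h2
          linarith
        constructor
        · refine sup_le ?_ (hf i).1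
          rw [tinv_coe, hP i, ← WithBot.coe_add, hX i, WithBot.coe_le_coe]
          linarith
        · rw [hUB i, hX i, WithBot.coe_le_coe, le_neg]
          refine sup_le ?_ ?_
          · linarith
          · have h3 := (hf i).2
            rw [hX i, hH i, WithBot.coe_le_coe] at h3
            linarith
      · intro hb
        refine le_antisymm (sup_le (cdot_le fun i => ?_) (cdot_le fun i => ?_)) (lb x hx hf)
        · have h2 := (hb i).2
          rw [hUB i, hX i, WithBot.coe_le_coe] at h2
          have h3 : -m - Q i ≤ (-m - Q i) ⊔ (-H i) := le_sup_left
          rw [hQ i, hX i, tinv_coe, ← WithBot.coe_add, WithBot.coe_le_coe]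
          linarith
        · have h1 := le_sup_left.trans (hb i).1
          rw [tinv_coe, hP i, ← WithBot.coe_add, hX i, WithBot.coe_le_coe] at h1
          rw [hX i, hP i, tinv_coe, ← WithBot.coe_add, WithBot.coe_le_coe]
          linarith
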